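/- For x > 0, I_0(x) K_0(x) = ∫₀^∞ e^{-4xr} φ(r) dr, where φ(r) = (1/(2π)) ∫₀^{2π} dθ/|1 - r e^{iθ}|. -/

import Mathlib

open MeasureTheory Real Set

theorem lintegral_image_eq_lintegral_abs_deriv_mul' {s : Set ℝ} {f : ℝ → ℝ} {f' : ℝ → ℝ}
    (hs : MeasurableSet s) (hf' : ∀ x ∈ s, HasDerivWithinAt f (f' x) s x)
    (hf : InjOn f s) (g : ℝ → ENNReal) :
    ∫⁻ x in f '' s, g x = ∫⁻ x in s, ENNReal.ofReal |f' x| * g (f x) := by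
  simpa only [ContinuousLinearMap.det_toSpanSingleton] using
    lintegral_image_eq_lintegral_abs_det_fderiv_mul volume hs
      (fun x hx => (hf' x hx).hasFDerivWithinAt) hf g

set_option maxHeartbeats 2000000 in
lemma stepE (r : ℝ) (hr0 : 0 < r) (hr1 : r ≠ 1) :
    ∫⁻ u in Set.Ioo (0:ℝ) (Real.arccos (|1-r| - r)),
        ENNReal.ofReal (2 / Real.sqrt ((2*r + Real.cos u)^2 - 1))
      = ∫⁻ θ in Set.Ioo (0:ℝ) π,
        ENNReal.ofReal (1 / Real.sqrt (1 - 2*r*Real.cos θ + r^2)) := by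
  have hroot : (1:ℝ) - r ≠ 0 := sub_ne_zero.mpr (fun h => hr1 h.symm)
  set b : ℝ := |1-r| - r with hb
  set L : ℝ := Real.arccos b with hLdef
  set q : ℝ → ℝ := fun θ => 1 - 2*r*Real.cos θ + r^2 with hqdef
  set U : ℝ → ℝ := fun θ => Real.arccos (Real.sqrt (q θ) - r) with hUdef
  set U' : ℝ → ℝ := fun θ =>
    -(1 / Real.sqrt (1 - (Real.sqrt (q θ) - r)^2)) * (r * Real.sin θ / Real.sqrt (q θ)) with hU'def
  have hb1 : -1 ≤ b := by
    have : -(1-r) ≤ |1-r| := neg_le_abs _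
    simp only [hb]; linarith
  have hb2 : b < 1 := by
    have h1 : |1-r| < 1 + r := abs_lt.mpr ⟨by linarith, by linarith⟩
    simp only [hb]; linarith
  have hb3 : 1 - 2*r ≤ b := by
    have := le_abs_self (1-r); simp only [hb]; linarith
  have hb0 : 0 ≤ b + r := by
    have : (0:ℝ) ≤ |1-r| := abs_nonneg _
    simp only [hb]; linarith
  have hcosL : Real.cos L = b := Real.cos_arccos hb1 hb2.le
  have hLpi : L ≤ π := Real.arccos_le_pi b
  have hL0 : 0 < L := Real.arccos_pos.2 hb2
  have hqpos : ∀ θ : ℝ, 0 < q θ := by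
    intro θ
    have h1 : Real.cos θ ≤ 1 := Real.cos_le_one θ
    have h2 : (0:ℝ) < (1-r)^2 := by positivity
    simp only [hqdef]; nlinarith
  -- strict bounds for θ in the open interval
  have hkey : ∀ θ ∈ Set.Ioo (0:ℝ) π,
      b < Real.sqrt (q θ) - r ∧ Real.sqrt (q θ) - r < 1 := by
    intro θ hθ
    have hc1 : Real.cos θ < 1 := by
      have := Real.strictAntiOn_cos ⟨le_refl 0, Real.pi_pos.le⟩
        ⟨hθ.1.le, hθ.2.le⟩ hθ.1
      simpa using this
    have hc2 : -1 < Real.cos θ := by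
      have := Real.strictAntiOn_cos ⟨hθ.1.le, hθ.2.le⟩
        ⟨Real.pi_pos.le, le_refl π⟩ hθ.2
      simpa using this
    have hlow : (1-r)^2 < q θ := by simp only [hqdef]; nlinarith
    have hhigh : q θ < (1+r)^2 := by simp only [hqdef]; nlinarith
    constructor
    · have := Real.sqrt_lt_sqrt (by positivity) hlow
      rw [Real.sqrt_sq_eq_abs] at this
      simp only [hb]; linarith [this]
    · have h2 := Real.sqrt_lt_sqrt (le_of_lt (hqpos θ)) hhigh
      rw [Real.sqrt_sq (by linarith : (0:ℝ) ≤ 1+r)] at h2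
      linarith
  -- image
  have himg : U '' Set.Ioo 0 π = Set.Ioo 0 L := by
    ext u
    constructor
    · rintro ⟨θ, hθ, rfl⟩
      obtain ⟨ht1, ht2⟩ := hkey θ hθ
      constructor
      · exact Real.arccos_pos.2 ht2
      · exact Real.strictAntiOn_arccos ⟨hb1, hb2.le⟩ ⟨by linarith, ht2.le⟩ ht1
    · rintro ⟨hu0, huL⟩
      have huπ : u < π := lt_of_lt_of_le huL hLpi
      have hcu : b < Real.cos u := by
        have := Real.strictAntiOn_cos ⟨hu0.le, huπ.le⟩
          ⟨Real.arccos_nonneg b, hLpi⟩ huL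
        rwa [hcosL] at this
      have hcu1 : Real.cos u < 1 := by
        have := Real.strictAntiOn_cos ⟨le_refl 0, Real.pi_pos.le⟩
          ⟨hu0.le, huπ.le⟩ hu0
        simpa using this
      have hsinu : 0 < Real.sin u := Real.sin_pos_of_pos_of_lt_pi hu0 huπ
      set e : ℝ := (Real.sin u^2 - 2*r*Real.cos u)/(2*r) with hedef
      have he1 : -1 < e := by
        rw [hedef, lt_div_iff₀ (by linarith : (0:ℝ) < 2*r)]
        nlinarith [Real.cos_le_one u]
      have he2 : e < 1 := by
        rw [hedef, div_lt_iff₀ (by linarith : (0:ℝ) < 2*r)]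
        have hc : 1 - 2*r < Real.cos u := lt_of_le_of_lt hb3 hcu
        have hs2 : Real.sin u^2 = (1 - Real.cos u)*(1 + Real.cos u) := by
          nlinarith [Real.sin_sq_add_cos_sq u]
        have hcu2 : -1 < Real.cos u := by
          have := Real.strictAntiOn_cos ⟨hu0.le, huπ.le⟩
            ⟨Real.pi_pos.le, le_refl π⟩ huπ
          simpa using this
        nlinarith
      refine ⟨Real.arccos e, ⟨Real.arccos_pos.2 he2, ?_⟩, ?_⟩
      · exact lt_of_le_of_ne (Real.arccos_le_pi e)
          (fun h => absurd (Real.arccos_eq_pi.1 h) (by linarith))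
      · have hcose : Real.cos (Real.arccos e) = e := Real.cos_arccos he1.le he2.le
        have hq : q (Real.arccos e) = (Real.cos u + r)^2 := by
          simp only [hqdef, hcose]
          rw [hedef]
          field_simp
          nlinarith [Real.sin_sq_add_cos_sq u]
        have hcur : 0 ≤ Real.cos u + r := by linarith
        simp only [hUdef, hq, Real.sqrt_sq hcur]
        have : Real.cos u + r - r = Real.cos u := by ring
        rw [this, Real.arccos_cos hu0.le huπ.le]
  -- injectivity
  have hinj : Set.InjOn U (Set.Ioo 0 π) := by
    intro θ₁ h₁ θ₂ h₂ hU
    obtain ⟨ha1, hb1'⟩ := hkey θ₁ h₁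
    obtain ⟨ha2, hb2'⟩ := hkey θ₂ h₂
    have e1 : Real.cos (U θ₁) = Real.sqrt (q θ₁) - r :=
      Real.cos_arccos (by linarith) (le_of_lt hb1')
    have e2 : Real.cos (U θ₂) = Real.sqrt (q θ₂) - r :=
      Real.cos_arccos (by linarith) (le_of_lt hb2')
    have hs : Real.sqrt (q θ₁) = Real.sqrt (q θ₂) := by
      have := congrArg Real.cos hU
      rw [e1, e2] at this; linarith
    have hq : q θ₁ = q θ₂ := by
      have := congrArg (fun t => t^2) hs
      simpa [Real.sq_sqrt (hqpos θ₁).le, Real.sq_sqrt (hqpos θ₂).le] using this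
    have hcc : Real.cos θ₁ = Real.cos θ₂ := by
      simp only [hqdef] at hq
      have : 2*r*Real.cos θ₁ = 2*r*Real.cos θ₂ := by linarith
      have h2r : (2:ℝ)*r ≠ 0 := by positivity
      exact mul_left_cancel₀ h2r this
    exact Real.injOn_cos ⟨h₁.1.le, h₁.2.le⟩ ⟨h₂.1.le, h₂.2.le⟩ hcc
  -- derivative
  have hderiv : ∀ θ ∈ Set.Ioo (0:ℝ) π, HasDerivWithinAt U (U' θ) (Set.Ioo 0 π) θ := by
    intro θ hθ
    obtain ⟨ht1, ht2⟩ := hkey θ hθ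
    have hq' : HasDerivAt q (2*r*Real.sin θ) θ := by
      have h := ((Real.hasDerivAt_cos θ).const_mul (2*r)).const_sub 1
      have h2 := h.add_const (r^2)
      exact h2.congr_deriv (by ring)
    have hsq' : HasDerivAt (fun θ => Real.sqrt (q θ)) (r*Real.sin θ/Real.sqrt (q θ)) θ := by
      have h := (Real.hasDerivAt_sqrt (hqpos θ).ne').comp θ hq'
      have : Real.sqrt (q θ) ≠ 0 := (Real.sqrt_pos.2 (hqpos θ)).ne'
      exact h.congr_deriv (by field_simp)
    have harc : HasDerivAt Real.arccos
        (-(1 / Real.sqrt (1 - (Real.sqrt (q θ) - r)^2))) (Real.sqrt (q θ) - r) :=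
      Real.hasDerivAt_arccos (by linarith) (ne_of_lt ht2)
    have := harc.comp θ (hsq'.sub_const r)
    exact (this.congr_deriv (by simp only [hU'def])).hasDerivWithinAt
  -- apply change of variables
  have := lintegral_image_eq_lintegral_abs_deriv_mul' measurableSet_Ioo hderiv hinj
    (fun u => ENNReal.ofReal (2 / Real.sqrt ((2*r + Real.cos u)^2 - 1)))
  rw [himg] at this
  rw [this]
  apply setLIntegral_congr_fun_ae measurableSet_Ioo (Filter.Eventually.of_forall ?_)
  intro θ hθ
  obtain ⟨ht1, ht2⟩ := hkey θ hθ
  have hqp := hqpos θ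
  set a : ℝ := Real.sqrt (q θ) with hadef
  have ha0 : 0 < a := Real.sqrt_pos.2 hqp
  have ha : a^2 = q θ := Real.sq_sqrt hqp.le
  have hcosU : Real.cos (U θ) = a - r := by
    simp only [hUdef]
    exact Real.cos_arccos (by linarith) ht2.le
  have hsin : 0 < Real.sin θ := Real.sin_pos_of_pos_of_lt_pi hθ.1 hθ.2
  clear_value a
  have hA : 0 < 1 - (a - r)^2 := by nlinarith
  have har : 1 < r + a := by
    have : 1 - r ≤ |1 - r| := le_abs_self _
    simp only [hb] at ht1; linarith
  have hB : 0 < (2*r + (a - r))^2 - 1 := by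
    have h' : 2*r + (a - r) = r + a := by ring
    rw [h']; nlinarith [har]
  have hsA : 0 < Real.sqrt (1 - (a - r)^2) := Real.sqrt_pos.2 hA
  have hsB : 0 < Real.sqrt ((2*r + (a - r))^2 - 1) := Real.sqrt_pos.2 hB
  have habs : |U' θ| = (1 / Real.sqrt (1 - (a - r)^2)) * (r * Real.sin θ / a) := by
    simp only [hU'def, ← hadef]
    rw [abs_mul, abs_neg, abs_of_nonneg (by positivity), abs_of_nonneg (by positivity)]
  rw [hcosU, habs, ← ENNReal.ofReal_mul (by positivity)]
  congr 1
  have hABprod : (1 - (a - r)^2) * ((2*r + (a - r))^2 - 1) = (2*r*Real.sin θ)^2 := by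
    have hqθ : a^2 = 1 - 2*r*Real.cos θ + r^2 := by rw [ha]
    linear_combination (4*r*Real.cos θ - a^2 + 1 - 2*r*Real.cos θ + r^2) * hqθ
      + (-(4*r^2)) * Real.sin_sq_add_cos_sq θ
  have hAB : Real.sqrt (1 - (a - r)^2) * Real.sqrt ((2*r + (a - r))^2 - 1)
      = 2*r*Real.sin θ := by
    rw [← Real.sqrt_mul hA.le, hABprod, Real.sqrt_sq (by positivity)]
  have hgoal : 1 / Real.sqrt (1 - (a - r)^2) * (r * Real.sin θ / a)
      * (2 / Real.sqrt ((2*r + (a - r))^2 - 1)) = 1 / a := by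
    have hrw : 1 / Real.sqrt (1 - (a - r)^2) * (r * Real.sin θ / a)
        * (2 / Real.sqrt ((2*r + (a - r))^2 - 1))
        = (2*r*Real.sin θ) / ((Real.sqrt (1 - (a - r)^2) * Real.sqrt ((2*r + (a - r))^2 - 1)) * a) := by
      ring
    rw [hrw, hAB, div_eq_div_iff (by positivity) (by positivity)]
    ring
  rw [hgoal]

noncomputable def ach (y : ℝ) : ℝ := Real.log (y + Real.sqrt (y^2 - 1))

lemma ach_aux_pos {y : ℝ} (hy : 1 ≤ y) : 0 < y + Real.sqrt (y^2 - 1) := by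
  have := Real.sqrt_nonneg (y^2-1); linarith

lemma cosh_ach {y : ℝ} (hy : 1 ≤ y) : Real.cosh (ach y) = y := by
  have h0 : (0:ℝ) ≤ y^2 - 1 := by nlinarith
  have hpos := ach_aux_pos hy
  have hexp : Real.exp (ach y) = y + Real.sqrt (y^2-1) := Real.exp_log hpos
  have hsq : Real.sqrt (y^2-1) ^ 2 = y^2 - 1 := Real.sq_sqrt h0
  have hmul : (y + Real.sqrt (y^2-1)) * (y - Real.sqrt (y^2-1)) = 1 := by nlinarith
  have hexp' : Real.exp (-(ach y)) = y - Real.sqrt (y^2-1) := by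
    rw [Real.exp_neg, hexp, inv_eq_of_mul_eq_one_right hmul]
  rw [Real.cosh_eq, hexp, hexp']; ring

lemma ach_cosh {v : ℝ} (hv : 0 ≤ v) : ach (Real.cosh v) = v := by
  have h1 : Real.cosh v ^ 2 - 1 = Real.sinh v ^ 2 := by rw [Real.cosh_sq]; ring
  rw [ach, h1, Real.sqrt_sq (Real.sinh_nonneg_iff.2 hv), Real.cosh_add_sinh, Real.log_exp]

lemma ach_pos {y : ℝ} (hy : 1 < y) : 0 < ach y := by
  apply Real.log_pos
  have := Real.sqrt_nonneg (y^2-1); linarith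

lemma hasDerivAt_ach {y : ℝ} (hy : 1 < y) : HasDerivAt ach (1 / Real.sqrt (y^2 - 1)) y := by
  have h0 : (0:ℝ) < y^2 - 1 := by nlinarith
  have hs : 0 < Real.sqrt (y^2-1) := Real.sqrt_pos.2 h0
  have h3 : Real.sqrt (y^2-1) * Real.sqrt (y^2-1) = y^2-1 := Real.mul_self_sqrt h0.le
  have hin : HasDerivAt (fun y : ℝ => y + Real.sqrt (y^2 - 1)) (1 + y / Real.sqrt (y^2-1)) y := by
    have hsq : HasDerivAt (fun y : ℝ => y^2 - 1) (2*y) y := by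
      simpa using ((hasDerivAt_pow 2 y).sub_const 1)
    have h := (Real.hasDerivAt_sqrt (ne_of_gt h0)).comp y hsq
    have := (hasDerivAt_id y).add h
    exact this.congr_deriv (by field_simp)
  have := (Real.hasDerivAt_log (ne_of_gt (ach_aux_pos hy.le))).comp y hin
  refine this.congr_deriv ?_
  field_simp
  nlinarith [h3]

set_option maxHeartbeats 1000000 in
lemma stepB (x c : ℝ) (hc1 : c ≤ 1) :
    ∫⁻ v in Set.Ioi (0:ℝ), ENNReal.ofReal (Real.exp (2*x*c - 2*x*Real.cosh v))
      = ∫⁻ r in Set.Ioi ((1-c)/2),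
          ENNReal.ofReal (2 / Real.sqrt ((2*r+c)^2 - 1)) * ENNReal.ofReal (Real.exp (-(4*x*r))) := by
  have hgt : ∀ ρ : ℝ, ρ ∈ Set.Ioi ((1-c)/2) → 1 < 2*ρ + c := by
    intro ρ hρ; rw [Set.mem_Ioi] at hρ; linarith
  have himg : (fun r => ach (2*r+c)) '' Set.Ioi ((1-c)/2) = Set.Ioi 0 := by
    ext v; constructor
    · rintro ⟨ρ, hρ, rfl⟩
      exact ach_pos (hgt ρ hρ)
    · intro hv
      rw [Set.mem_Ioi] at hv
      refine ⟨(Real.cosh v - c)/2, ?_, ?_⟩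
      · rw [Set.mem_Ioi]
        have := Real.one_lt_cosh.2 (ne_of_gt hv); linarith
      · show ach (2*((Real.cosh v - c)/2)+c) = v
        have h2 : 2*((Real.cosh v - c)/2)+c = Real.cosh v := by ring
        rw [h2, ach_cosh hv.le]
  have hderiv : ∀ ρ ∈ Set.Ioi ((1-c)/2),
      HasDerivWithinAt (fun r => ach (2*r+c)) (2 / Real.sqrt ((2*ρ+c)^2-1))
        (Set.Ioi ((1-c)/2)) ρ := by
    intro ρ hρ
    have h1 := hgt ρ hρ
    have hlin : HasDerivAt (fun r : ℝ => 2*r + c) 2 ρ := by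
      simpa using ((hasDerivAt_id ρ).const_mul 2).add_const c
    have := (hasDerivAt_ach h1).comp ρ hlin
    refine HasDerivAt.hasDerivWithinAt ?_
    exact this.congr_deriv (by field_simp)
  have hinj : Set.InjOn (fun r => ach (2*r+c)) (Set.Ioi ((1-c)/2)) := by
    intro r1 h1 r2 h2 heq
    have := congrArg Real.cosh heq
    simp only at this
    rw [cosh_ach (hgt r1 h1).le, cosh_ach (hgt r2 h2).le] at this
    linarith
  have key := lintegral_image_eq_lintegral_abs_deriv_mul' measurableSet_Ioi hderiv hinj
    (fun v => ENNReal.ofReal (Real.exp (2*x*c - 2*x*Real.cosh v)))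
  rw [himg] at key
  rw [key]
  apply setLIntegral_congr_fun_ae measurableSet_Ioi (Filter.Eventually.of_forall ?_)
  intro ρ hρ
  have h1 := hgt ρ hρ
  have hD : 0 < (2*ρ+c)^2 - 1 := by nlinarith
  rw [cosh_ach h1.le, abs_of_nonneg (by positivity : (0:ℝ) ≤ 2 / Real.sqrt ((2*ρ+c)^2-1))]
  congr 1
  congr 1
  ring

lemma abs_one_sub_mul_exp (r θ : ℝ) :
    ‖1 - (r : ℂ) * Complex.exp (θ * Complex.I)‖
      = Real.sqrt (1 - 2*r*Real.cos θ + r^2) := by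
  have h1 : (1 : ℂ) - (r : ℂ) * Complex.exp (θ * Complex.I)
      = Complex.ofReal (1 - r * Real.cos θ) + Complex.ofReal (-(r * Real.sin θ)) * Complex.I := by
    rw [Complex.exp_mul_I, ← Complex.ofReal_cos, ← Complex.ofReal_sin]
    push_cast
    ring
  rw [h1, Complex.norm_def, Complex.normSq_add_mul_I]
  congr 1
  nlinarith [Real.sin_sq_add_cos_sq θ]

set_option maxHeartbeats 1000000 in
lemma theta_sym (r : ℝ) :
    ∫⁻ θ in Set.Ioc (0:ℝ) (2*π), ENNReal.ofReal (1/Real.sqrt (1-2*r*Real.cos θ+r^2))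
      = 2 * ∫⁻ θ in Set.Ioo (0:ℝ) π, ENNReal.ofReal (1/Real.sqrt (1-2*r*Real.cos θ+r^2)) := by
  have hsplit : Set.Ioc (0:ℝ) π ∪ Set.Ioc π (2*π) = Set.Ioc (0:ℝ) (2*π) :=
    Set.Ioc_union_Ioc_eq_Ioc Real.pi_pos.le (by linarith [Real.pi_pos])
  have hdisj : Disjoint (Set.Ioc (0:ℝ) π) (Set.Ioc π (2*π)) := by
    apply Set.disjoint_left.2
    rintro a ⟨_, h1⟩ ⟨h2, _⟩
    exact absurd h2 (not_lt.2 h1)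
  rw [← hsplit, lintegral_union measurableSet_Ioc hdisj]
  have e1 : ∫⁻ θ in Set.Ioc (0:ℝ) π, ENNReal.ofReal (1/Real.sqrt (1-2*r*Real.cos θ+r^2))
      = ∫⁻ θ in Set.Ioo (0:ℝ) π, ENNReal.ofReal (1/Real.sqrt (1-2*r*Real.cos θ+r^2)) :=
    (setLIntegral_congr MeasureTheory.Ioo_ae_eq_Ioc).symm
  have himg : (fun θ : ℝ => 2*π - θ) '' Set.Ioo π (2*π) = Set.Ioo 0 π := by
    ext v; constructor
    · rintro ⟨θ, hθ, rfl⟩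
      simp only [Set.mem_Ioo] at hθ ⊢
      constructor <;> linarith [hθ.1, hθ.2]
    · intro hv
      simp only [Set.mem_Ioo] at hv
      refine ⟨2*π - v, ?_, by ring⟩
      simp only [Set.mem_Ioo]
      constructor <;> linarith [hv.1, hv.2]
  have hderiv : ∀ θ ∈ Set.Ioo π (2*π),
      HasDerivWithinAt (fun θ : ℝ => 2*π - θ) (-1) (Set.Ioo π (2*π)) θ := by
    intro θ _
    exact ((hasDerivAt_id θ).const_sub (2*π)).hasDerivWithinAt
  have hinj : Set.InjOn (fun θ : ℝ => 2*π - θ) (Set.Ioo π (2*π)) := by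
    intro a _ b _ h; simp only at h; linarith
  have key := lintegral_image_eq_lintegral_abs_deriv_mul' measurableSet_Ioo hderiv hinj
    (fun θ => ENNReal.ofReal (1/Real.sqrt (1-2*r*Real.cos θ+r^2)))
  rw [himg] at key
  have e2 : ∫⁻ θ in Set.Ioc π (2*π), ENNReal.ofReal (1/Real.sqrt (1-2*r*Real.cos θ+r^2))
      = ∫⁻ θ in Set.Ioo (0:ℝ) π, ENNReal.ofReal (1/Real.sqrt (1-2*r*Real.cos θ+r^2)) := by
    rw [key, ← setLIntegral_congr (MeasureTheory.Ioo_ae_eq_Ioc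
      (a := π) (b := 2*π))]
    apply setLIntegral_congr_fun_ae measurableSet_Ioo (Filter.Eventually.of_forall ?_)
    intro θ _
    rw [Real.cos_two_pi_sub]
    simp
  rw [e1, e2]; ring

lemma indic_ext {s₀ : ℝ} (h : 0 ≤ s₀) (f : ℝ → ENNReal) :
    ∫⁻ ρ in Set.Ioi s₀, f ρ = ∫⁻ ρ in Set.Ioi (0:ℝ), (Set.Ioi s₀).indicator f ρ := by
  rw [lintegral_indicator measurableSet_Ioi, Measure.restrict_restrict measurableSet_Ioi,
    Set.Ioi_inter_Ioi, sup_eq_left.2 h]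

lemma setEq (r : ℝ) (hr0 : 0 < r) (hr1 : r ≠ 1) :
    ({u : ℝ | (1 - Real.cos u)/2 < r} ∩ Set.Ioc 0 π : Set ℝ)
      =ᵐ[volume] Set.Ioo 0 (Real.arccos (|1-r| - r)) := by
  rcases lt_or_gt_of_ne hr1 with hlt | hgt
  · have habs : |1 - r| = 1 - r := abs_of_nonneg (by linarith)
    have harg : |1 - r| - r = 1 - 2*r := by rw [habs]; ring
    rw [harg]
    have hb1 : (-1:ℝ) ≤ 1 - 2*r := by linarith
    have hL : Real.cos (Real.arccos (1 - 2*r)) = 1 - 2*r :=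
      Real.cos_arccos hb1 (by linarith)
    have hLpi : Real.arccos (1-2*r) ≤ π := Real.arccos_le_pi _
    have heq : {u : ℝ | (1 - Real.cos u)/2 < r} ∩ Set.Ioc 0 π
        = Set.Ioo 0 (Real.arccos (1 - 2*r)) := by
      ext u
      simp only [Set.mem_inter_iff, Set.mem_setOf_eq, Set.mem_Ioc, Set.mem_Ioo]
      constructor
      · rintro ⟨hc, hu0, huπ⟩
        refine ⟨hu0, ?_⟩
        by_contra hge
        push_neg at hge
        have := Real.strictAntiOn_cos.antitoneOn
          ⟨Real.arccos_nonneg _, hLpi⟩ ⟨hu0.le, huπ⟩ hge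
        rw [hL] at this
        linarith
      · rintro ⟨hu0, huL⟩
        have huπ : u < π := lt_of_lt_of_le huL hLpi
        have := Real.strictAntiOn_cos ⟨hu0.le, huπ.le⟩
          ⟨Real.arccos_nonneg _, hLpi⟩ huL
        rw [hL] at this
        exact ⟨by linarith, hu0, huπ.le⟩
    rw [heq]
    exact Filter.EventuallyEq.rfl
  · have habs : |1 - r| = r - 1 := by
      rw [abs_of_nonpos (by linarith)]; ring
    have harg : |1 - r| - r = -1 := by rw [habs]; ring
    rw [harg, Real.arccos_neg_one]
    have heq : {u : ℝ | (1 - Real.cos u)/2 < r} ∩ Set.Ioc 0 π = Set.Ioc 0 π := by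
      ext u
      simp only [Set.mem_inter_iff, Set.mem_setOf_eq, Set.mem_Ioc, and_iff_right_iff_imp]
      intro _
      have := Real.neg_one_le_cos u
      linarith
    rw [heq]
    exact (MeasureTheory.Ioo_ae_eq_Ioc).symm

set_option maxHeartbeats 1000000 in
lemma rowId (x r : ℝ) (hr0 : 0 < r) (hr1 : r ≠ 1) :
    ∫⁻ u in Set.Ioc (0:ℝ) π,
        (Set.Ioi ((1 - Real.cos u)/2)).indicator
          (fun ρ => ENNReal.ofReal (2 / Real.sqrt ((2*ρ + Real.cos u)^2 - 1))
            * ENNReal.ofReal (Real.exp (-(4*x*ρ)))) r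
      = ENNReal.ofReal (Real.exp (-(4*x*r)))
          * ∫⁻ θ in Set.Ioo (0:ℝ) π,
              ENNReal.ofReal (1/Real.sqrt (1 - 2*r*Real.cos θ + r^2)) := by
  have hS : MeasurableSet {u : ℝ | (1 - Real.cos u)/2 < r} :=
    measurableSet_lt (by measurability) measurable_const
  have h1 : ∀ u : ℝ, (Set.Ioi ((1 - Real.cos u)/2)).indicator
      (fun ρ => ENNReal.ofReal (2 / Real.sqrt ((2*ρ + Real.cos u)^2 - 1))
        * ENNReal.ofReal (Real.exp (-(4*x*ρ)))) r
      = {u : ℝ | (1 - Real.cos u)/2 < r}.indicator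
          (fun u => ENNReal.ofReal (2 / Real.sqrt ((2*r + Real.cos u)^2 - 1))
            * ENNReal.ofReal (Real.exp (-(4*x*r)))) u := by
    intro u
    simp only [Set.indicator_apply, Set.mem_Ioi, Set.mem_setOf_eq]
  calc ∫⁻ u in Set.Ioc (0:ℝ) π, (Set.Ioi ((1 - Real.cos u)/2)).indicator
          (fun ρ => ENNReal.ofReal (2 / Real.sqrt ((2*ρ + Real.cos u)^2 - 1))
            * ENNReal.ofReal (Real.exp (-(4*x*ρ)))) r
      = ∫⁻ u in Set.Ioc (0:ℝ) π, {u : ℝ | (1 - Real.cos u)/2 < r}.indicator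
          (fun u => ENNReal.ofReal (2 / Real.sqrt ((2*r + Real.cos u)^2 - 1))
            * ENNReal.ofReal (Real.exp (-(4*x*r)))) u := by
        exact lintegral_congr (fun u => h1 u)
    _ = ∫⁻ u in {u : ℝ | (1 - Real.cos u)/2 < r} ∩ Set.Ioc (0:ℝ) π,
          ENNReal.ofReal (2 / Real.sqrt ((2*r + Real.cos u)^2 - 1))
            * ENNReal.ofReal (Real.exp (-(4*x*r))) := by
        rw [lintegral_indicator hS, Measure.restrict_restrict hS]
    _ = ∫⁻ u in Set.Ioo (0:ℝ) (Real.arccos (|1-r| - r)),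
          ENNReal.ofReal (2 / Real.sqrt ((2*r + Real.cos u)^2 - 1))
            * ENNReal.ofReal (Real.exp (-(4*x*r))) :=
        setLIntegral_congr (setEq r hr0 hr1)
    _ = (∫⁻ u in Set.Ioo (0:ℝ) (Real.arccos (|1-r| - r)),
          ENNReal.ofReal (2 / Real.sqrt ((2*r + Real.cos u)^2 - 1)))
            * ENNReal.ofReal (Real.exp (-(4*x*r))) :=
        lintegral_mul_const' _ _ ENNReal.ofReal_ne_top
    _ = (∫⁻ θ in Set.Ioo (0:ℝ) π,
          ENNReal.ofReal (1/Real.sqrt (1 - 2*r*Real.cos θ + r^2)))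
            * ENNReal.ofReal (Real.exp (-(4*x*r))) := by
        rw [stepE r hr0 hr1]
    _ = _ := mul_comm _ _

set_option maxHeartbeats 4000000 in
theorem I0K0_integral_formula (x : ℝ) (hx : 0 < x) :
    ((1 / π) * ∫ u in (0:ℝ)..π, Real.exp (2 * x * Real.cos u)) *
      (∫ v in Set.Ioi (0:ℝ), Real.exp (-2 * x * Real.cosh v)) =
    ∫ r in Set.Ioi (0:ℝ), Real.exp (-4 * x * r) *
      ((1 / (2 * π)) * ∫ θ in (0:ℝ)..(2 * π),
        1 / ‖1 - (r : ℂ) * Complex.exp (θ * Complex.I)‖) := by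
  have hπ := Real.pi_pos
  set F : ℝ → ℝ → ENNReal := fun u ρ => (Set.Ioi ((1 - Real.cos u)/2)).indicator
    (fun ρ => ENNReal.ofReal (2 / Real.sqrt ((2*ρ + Real.cos u)^2 - 1))
      * ENNReal.ofReal (Real.exp (-(4*x*ρ)))) ρ with hFdef
  set Mid : ENNReal := ∫⁻ r in Set.Ioi (0:ℝ), ENNReal.ofReal (1/π)
    * (ENNReal.ofReal (Real.exp (-(4*x*r)))
      * ∫⁻ θ in Set.Ioo (0:ℝ) π,
          ENNReal.ofReal (1/Real.sqrt (1 - 2*r*Real.cos θ + r^2))) with hMid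
  have hFmeas : Measurable (Function.uncurry F) := by
    have hrw : Function.uncurry F = fun p : ℝ × ℝ =>
        Set.indicator {p : ℝ × ℝ | (1 - Real.cos p.1)/2 < p.2}
          (fun p => ENNReal.ofReal (2 / Real.sqrt ((2*p.2 + Real.cos p.1)^2 - 1))
            * ENNReal.ofReal (Real.exp (-(4*x*p.2)))) p := by
      funext p
      simp only [hFdef, Function.uncurry, Set.indicator_apply, Set.mem_Ioi, Set.mem_setOf_eq]
    rw [hrw]
    apply Measurable.indicator
    · apply Measurable.fun_mul
      · apply ENNReal.measurable_ofReal.comp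
        apply Measurable.div measurable_const
        apply Real.continuous_sqrt.measurable.comp
        measurability
      · apply ENNReal.measurable_ofReal.comp
        measurability
    · exact measurableSet_lt (by measurability) measurable_snd
  -- a.e. filter on Ioi 0 excluding 1
  have hae : ∀ᵐ ρ ∂(volume.restrict (Set.Ioi (0:ℝ))), ρ ∈ Set.Ioi (0:ℝ) ∧ ρ ≠ (1:ℝ) := by
    refine ((ae_restrict_mem measurableSet_Ioi).and ?_)
    refine ae_restrict_of_ae ?_
    rw [MeasureTheory.ae_iff]
    have : {a : ℝ | ¬ a ≠ 1} = {1} := by ext a; simp [not_not]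
    rw [this]
    exact Real.volume_singleton
  -- LHS
  have hL : ((1 / π) * ∫ u in (0:ℝ)..π, Real.exp (2 * x * Real.cos u)) *
      (∫ v in Set.Ioi (0:ℝ), Real.exp (-2 * x * Real.cosh v)) = Mid.toReal := by
    have hA : ∫ u in (0:ℝ)..π, Real.exp (2 * x * Real.cos u)
        = (∫⁻ u in Set.Ioc (0:ℝ) π, ENNReal.ofReal (Real.exp (2 * x * Real.cos u))).toReal := by
      rw [intervalIntegral.integral_of_le hπ.le]
      exact integral_eq_lintegral_of_nonneg_ae
        (Filter.Eventually.of_forall (fun u => Real.exp_nonneg _))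
        ((Real.continuous_exp.comp ((continuous_const.mul Real.continuous_cos))).aestronglyMeasurable)
    have hB : ∫ v in Set.Ioi (0:ℝ), Real.exp (-2 * x * Real.cosh v)
        = (∫⁻ v in Set.Ioi (0:ℝ), ENNReal.ofReal (Real.exp (-2 * x * Real.cosh v))).toReal :=
      integral_eq_lintegral_of_nonneg_ae
        (Filter.Eventually.of_forall (fun u => Real.exp_nonneg _))
        ((Real.continuous_exp.comp ((continuous_const.mul Real.continuous_cosh))).aestronglyMeasurable)
    rw [hA, hB, mul_assoc, ← ENNReal.toReal_mul,
      ← ENNReal.toReal_ofReal (le_of_lt (by positivity : (0:ℝ) < 1/π)), ← ENNReal.toReal_mul]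
    congr 1
    have hmeasA : Measurable fun u : ℝ => ENNReal.ofReal (Real.exp (2 * x * Real.cos u)) := by
      measurability
    calc ENNReal.ofReal (1/π) * ((∫⁻ u in Set.Ioc (0:ℝ) π, ENNReal.ofReal (Real.exp (2 * x * Real.cos u)))
          * ∫⁻ v in Set.Ioi (0:ℝ), ENNReal.ofReal (Real.exp (-2 * x * Real.cosh v)))
        = ENNReal.ofReal (1/π) * ∫⁻ u in Set.Ioc (0:ℝ) π,
            (ENNReal.ofReal (Real.exp (2 * x * Real.cos u))
              * ∫⁻ v in Set.Ioi (0:ℝ), ENNReal.ofReal (Real.exp (-2 * x * Real.cosh v))) := by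
          rw [lintegral_mul_const _ hmeasA]
      _ = ENNReal.ofReal (1/π) * ∫⁻ u in Set.Ioc (0:ℝ) π, ∫⁻ ρ in Set.Ioi (0:ℝ), F u ρ := by
          congr 1
          refine setLIntegral_congr_fun_ae measurableSet_Ioc (Filter.Eventually.of_forall ?_)
          intro u _
          calc ENNReal.ofReal (Real.exp (2 * x * Real.cos u))
                * ∫⁻ v in Set.Ioi (0:ℝ), ENNReal.ofReal (Real.exp (-2 * x * Real.cosh v))
              = ∫⁻ v in Set.Ioi (0:ℝ), ENNReal.ofReal (Real.exp (2 * x * Real.cos u))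
                  * ENNReal.ofReal (Real.exp (-2 * x * Real.cosh v)) :=
                (lintegral_const_mul' _ _ ENNReal.ofReal_ne_top).symm
            _ = ∫⁻ v in Set.Ioi (0:ℝ), ENNReal.ofReal
                  (Real.exp (2*x*Real.cos u - 2*x*Real.cosh v)) := by
                refine setLIntegral_congr_fun_ae measurableSet_Ioi (Filter.Eventually.of_forall ?_)
                intro v _
                rw [← ENNReal.ofReal_mul (Real.exp_nonneg _), ← Real.exp_add]
                congr 2
                ring
            _ = ∫⁻ ρ in Set.Ioi ((1 - Real.cos u)/2),
                  ENNReal.ofReal (2 / Real.sqrt ((2*ρ + Real.cos u)^2 - 1))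
                    * ENNReal.ofReal (Real.exp (-(4*x*ρ))) :=
                stepB x (Real.cos u) (Real.cos_le_one u)
            _ = ∫⁻ ρ in Set.Ioi (0:ℝ), F u ρ := by
                apply indic_ext
                have := Real.cos_le_one u
                linarith
      _ = ENNReal.ofReal (1/π) * ∫⁻ ρ in Set.Ioi (0:ℝ), ∫⁻ u in Set.Ioc (0:ℝ) π, F u ρ := by
          rw [lintegral_lintegral_swap hFmeas.aemeasurable]
      _ = Mid := by
          rw [hMid, lintegral_const_mul' _ _ ENNReal.ofReal_ne_top]
          congr 1
          apply lintegral_congr_ae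
          filter_upwards [hae] with ρ hρ
          exact rowId x ρ hρ.1 hρ.2
  -- RHS
  have hR : (∫ r in Set.Ioi (0:ℝ), Real.exp (-4 * x * r) *
      ((1 / (2 * π)) * ∫ θ in (0:ℝ)..(2 * π),
        1 / ‖1 - (r : ℂ) * Complex.exp (θ * Complex.I)‖)) = Mid.toReal := by
    have hG2 : ∀ r : ℝ, Real.exp (-4 * x * r) *
        ((1 / (2 * π)) * ∫ θ in (0:ℝ)..(2 * π),
          1 / ‖1 - (r : ℂ) * Complex.exp (θ * Complex.I)‖)
        = Real.exp (-(4 * x * r)) *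
        ((1 / (2 * π)) * ∫ θ in Set.Ioc (0:ℝ) (2*π),
          1 / Real.sqrt (1 - 2*r*Real.cos θ + r^2)) := by
      intro r
      rw [intervalIntegral.integral_of_le (by linarith)]
      have h1 : (-4) * x * r = -(4*x*r) := by ring
      rw [h1]
      congr 2
      refine integral_congr_ae (Filter.Eventually.of_forall ?_)
      intro θ
      simp only [abs_one_sub_mul_exp]
    rw [integral_congr_ae (Filter.Eventually.of_forall (fun r => hG2 r))]
    have hJmeas : StronglyMeasurable fun r : ℝ =>
        ∫ θ, (fun r θ => 1 / Real.sqrt (1 - 2*r*Real.cos θ + r^2)) r θ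
          ∂(volume.restrict (Set.Ioc (0:ℝ) (2*π))) := by
      apply StronglyMeasurable.integral_prod_right
      apply Measurable.stronglyMeasurable
      apply Measurable.div measurable_const
      apply Real.continuous_sqrt.measurable.comp
      measurability
    have hGmeas : AEStronglyMeasurable (fun r : ℝ => Real.exp (-(4 * x * r)) *
        ((1 / (2 * π)) * ∫ θ in Set.Ioc (0:ℝ) (2*π),
          1 / Real.sqrt (1 - 2*r*Real.cos θ + r^2)))
        (volume.restrict (Set.Ioi (0:ℝ))) := by
      apply StronglyMeasurable.aestronglyMeasurable
      apply StronglyMeasurable.mul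
      · exact (Real.continuous_exp.comp (continuous_const.mul continuous_id).neg).stronglyMeasurable
      · exact hJmeas.const_mul _
    have hGnn : 0 ≤ᵐ[volume.restrict (Set.Ioi (0:ℝ))] fun r : ℝ => Real.exp (-(4 * x * r)) *
        ((1 / (2 * π)) * ∫ θ in Set.Ioc (0:ℝ) (2*π),
          1 / Real.sqrt (1 - 2*r*Real.cos θ + r^2)) := by
      refine Filter.Eventually.of_forall (fun r => ?_)
      have hint : 0 ≤ ∫ θ in Set.Ioc (0:ℝ) (2*π), 1 / Real.sqrt (1 - 2*r*Real.cos θ + r^2) := by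
        apply setIntegral_nonneg measurableSet_Ioc
        intro θ _
        positivity
      positivity
    rw [integral_eq_lintegral_of_nonneg_ae hGnn hGmeas]
    congr 1
    apply lintegral_congr_ae
    filter_upwards [hae] with r hr
    obtain ⟨hr0', hr1⟩ := hr
    have hr0 : (0:ℝ) < r := hr0'
    -- pointwise identity for r > 0, r ≠ 1
    have hroot : (1:ℝ) - r ≠ 0 := sub_ne_zero.mpr (fun h => hr1 h.symm)
    have habs : (0:ℝ) < |1 - r| := abs_pos.2 hroot
    have hqpos : ∀ θ : ℝ, 0 < 1 - 2*r*Real.cos θ + r^2 := by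
      intro θ
      have h1 : Real.cos θ ≤ 1 := Real.cos_le_one θ
      have h2 : (0:ℝ) < (1-r)^2 := by positivity
      nlinarith
    have hcont : Continuous fun θ : ℝ => 1 / Real.sqrt (1 - 2*r*Real.cos θ + r^2) := by
      apply continuous_const.div
      · apply Real.continuous_sqrt.comp
        continuity
      · intro θ
        exact ne_of_gt (Real.sqrt_pos.2 (hqpos θ))
    have hJ : ∫ θ in Set.Ioc (0:ℝ) (2*π), 1 / Real.sqrt (1 - 2*r*Real.cos θ + r^2)
        = (∫⁻ θ in Set.Ioc (0:ℝ) (2*π),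
            ENNReal.ofReal (1 / Real.sqrt (1 - 2*r*Real.cos θ + r^2))).toReal :=
      integral_eq_lintegral_of_nonneg_ae
        (Filter.Eventually.of_forall (fun θ => by positivity))
        hcont.aestronglyMeasurable
    have hTfin : (∫⁻ θ in Set.Ioc (0:ℝ) (2*π),
        ENNReal.ofReal (1 / Real.sqrt (1 - 2*r*Real.cos θ + r^2))) ≠ ⊤ := by
      have hb : ∀ θ : ℝ, ENNReal.ofReal (1 / Real.sqrt (1 - 2*r*Real.cos θ + r^2))
          ≤ ENNReal.ofReal (1 / |1-r|) := by
        intro θ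
        apply ENNReal.ofReal_le_ofReal
        have h1 : |1-r| ≤ Real.sqrt (1 - 2*r*Real.cos θ + r^2) := by
          rw [← Real.sqrt_sq_eq_abs]
          apply Real.sqrt_le_sqrt
          have := Real.cos_le_one θ
          nlinarith
        exact one_div_le_one_div_of_le habs h1
      have hle := lintegral_mono hb (μ := volume.restrict (Set.Ioc (0:ℝ) (2*π)))
      rw [lintegral_const] at hle
      refine ne_of_lt (lt_of_le_of_lt hle ?_)
      apply ENNReal.mul_lt_top ENNReal.ofReal_lt_top
      rw [Measure.restrict_apply_univ, Real.volume_Ioc]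
      exact ENNReal.ofReal_lt_top
    have h2T : ENNReal.ofReal (∫ θ in Set.Ioc (0:ℝ) (2*π),
        1 / Real.sqrt (1 - 2*r*Real.cos θ + r^2))
        = 2 * ∫⁻ θ in Set.Ioo (0:ℝ) π,
            ENNReal.ofReal (1/Real.sqrt (1 - 2*r*Real.cos θ + r^2)) := by
      rw [hJ, ENNReal.ofReal_toReal hTfin]
      exact theta_sym r
    rw [ENNReal.ofReal_mul (Real.exp_nonneg _), ENNReal.ofReal_mul (by positivity : (0:ℝ) ≤ 1/(2*π)),
      h2T]
    have hconst : ENNReal.ofReal (1/(2*π)) * (2 * ∫⁻ θ in Set.Ioo (0:ℝ) π,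
        ENNReal.ofReal (1/Real.sqrt (1 - 2*r*Real.cos θ + r^2)))
        = ENNReal.ofReal (1/π) * ∫⁻ θ in Set.Ioo (0:ℝ) π,
            ENNReal.ofReal (1/Real.sqrt (1 - 2*r*Real.cos θ + r^2)) := by
      rw [← mul_assoc]
      congr 1
      have h2 : (2:ENNReal) = ENNReal.ofReal 2 := by simp
      rw [h2, ← ENNReal.ofReal_mul (by positivity : (0:ℝ) ≤ 1/(2*π))]
      congr 1
      field_simp
    rw [hconst]
    ring
  rw [hL, hR]
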